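/- arXiv:1504.07407 — 2 statements merged into one kernel-verified Lean document; each statement's English description precedes it below -/
import Mathlib

section
/- Let M be a compact metric space and (g_t)_{t∈[−1,1]} a family of Borel functions g_t : M \ S → ℝ on the complement of a closed set S, satisfying the Hölder-in-parameter bound |g_t(x) − g_s(x)| ≤ c|t − s|^β for all x ∈ M \ S and all t, s, with c > 0, β > 0. Suppose each g_t is integrable with respect to a Borel probability measure μ_t with μ_t(S) = 0, the map t ↦ μ_t is weak* continuous, g_0 extends continuously to M, and |∫ g_t dμ_t| ≤ A for a uniform constant A. Then lim_{t→0} ∫ g_t dμ_t = ∫ g_0 dμ_0. -/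
open MeasureTheory Filter Topology

/-- Continuity at `t = 0` of `t ↦ ∫ g_t dμ_t` under: a Hölder-in-parameter bound off a null
closed set `S`, weak* continuity of the measures, a continuous extension of `g_0`, and a
uniform bound on the integrals. -/
theorem stmt11 {M : Type*} [MetricSpace M] [CompactSpace M] [MeasurableSpace M] [BorelSpace M]
    (S : Set M) (hS : IsClosed S)
    (μ : ℝ → ProbabilityMeasure M)
    (hμcont : ContinuousOn μ (Set.Icc (-1) 1))
    (hnull : ∀ t ∈ Set.Icc (-1 : ℝ) 1, (μ t : Measure M) S = 0)
    (g : ℝ → M → ℝ) (c β : ℝ) (hc : 0 < c) (hβ : 0 < β)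
    (hHolder : ∀ x ∉ S, ∀ t ∈ Set.Icc (-1 : ℝ) 1, ∀ s ∈ Set.Icc (-1 : ℝ) 1,
      |g t x - g s x| ≤ c * |t - s| ^ β)
    (hint : ∀ t ∈ Set.Icc (-1 : ℝ) 1, Integrable (g t) (μ t : Measure M))
    (G : M → ℝ) (hGcont : Continuous G) (hG : ∀ x ∉ S, G x = g 0 x)
    (A : ℝ) (hA : ∀ t ∈ Set.Icc (-1 : ℝ) 1, |∫ x, g t x ∂(μ t : Measure M)| ≤ A) :
    Tendsto (fun t => ∫ x, g t x ∂(μ t : Measure M)) (𝓝[Set.Icc (-1 : ℝ) 1] 0)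
      (𝓝 (∫ x, g 0 x ∂(μ 0 : Measure M))) := by
  have h0 : (0 : ℝ) ∈ Set.Icc (-1 : ℝ) 1 := by constructor <;> norm_num
  set Gb : BoundedContinuousFunction M ℝ := BoundedContinuousFunction.mkOfCompact ⟨G, hGcont⟩
  -- integrability of G
  have hGint : ∀ t : ℝ, Integrable G (μ t : Measure M) := fun t => Gb.integrable _
  -- a.e. x ∉ S
  have hae : ∀ t ∈ Set.Icc (-1 : ℝ) 1, ∀ᵐ x ∂(μ t : Measure M), x ∉ S := by
    intro t ht
    exact (ae_iff.2 (by simpa using hnull t ht))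
  -- equality of integrals at 0
  have h0eq : ∫ x, G x ∂(μ 0 : Measure M) = ∫ x, g 0 x ∂(μ 0 : Measure M) := by
    refine integral_congr_ae ?_
    filter_upwards [hae 0 h0] with x hx using hG x hx
  -- weak convergence part
  have hμt : Tendsto μ (𝓝[Set.Icc (-1 : ℝ) 1] 0) (𝓝 (μ 0)) := hμcont 0 h0
  have hGconv : Tendsto (fun t => ∫ x, G x ∂(μ t : Measure M)) (𝓝[Set.Icc (-1 : ℝ) 1] 0)
      (𝓝 (∫ x, G x ∂(μ 0 : Measure M))) := by
    have := (ProbabilityMeasure.tendsto_iff_forall_integral_tendsto.1 hμt) Gb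
    exact this
  -- difference bound
  have hdiff : ∀ t ∈ Set.Icc (-1 : ℝ) 1,
      |(∫ x, g t x ∂(μ t : Measure M)) - ∫ x, G x ∂(μ t : Measure M)| ≤ c * |t| ^ β := by
    intro t ht
    rw [← integral_sub (hint t ht) (hGint t)]
    have hb : ∀ᵐ x ∂(μ t : Measure M), ‖g t x - G x‖ ≤ c * |t| ^ β := by
      filter_upwards [hae t ht] with x hx
      have := hHolder x hx t ht 0 h0
      simpa [hG x hx, Real.norm_eq_abs] using this
    have := norm_integral_le_of_norm_le_const hb (μ := (μ t : Measure M))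
    simpa [Real.norm_eq_abs] using this
  -- conclude by squeeze
  have hbound : Tendsto (fun t : ℝ => c * |t| ^ β) (𝓝[Set.Icc (-1 : ℝ) 1] 0) (𝓝 0) := by
    have h1 : ContinuousAt (fun x : ℝ => x ^ β) 0 :=
      Real.continuousAt_rpow_const 0 β (Or.inr hβ.le)
    have h2 : Tendsto (fun t : ℝ => |t| ^ β) (𝓝 0) (𝓝 0) := by
      have habs : Tendsto (fun t : ℝ => |t|) (𝓝 0) (𝓝 0) := by
        simpa using continuous_abs.tendsto (0 : ℝ)
      have := h1.tendsto.comp habs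
      simpa [Function.comp_def, Real.zero_rpow hβ.ne'] using this
    have h3 : Tendsto (fun t : ℝ => c * |t| ^ β) (𝓝 0) (𝓝 0) := by
      simpa using h2.const_mul c
    exact h3.mono_left nhdsWithin_le_nhds
  have hdz : Tendsto (fun t => (∫ x, g t x ∂(μ t : Measure M)) - ∫ x, G x ∂(μ t : Measure M))
      (𝓝[Set.Icc (-1 : ℝ) 1] 0) (𝓝 0) := by
    apply squeeze_zero_norm' _ hbound
    filter_upwards [self_mem_nhdsWithin] with t ht
    simpa [Real.norm_eq_abs] using hdiff t ht
  have := hdz.add hGconv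
  rw [← h0eq]
  simpa using this
end

section
/- Let V be a finite-dimensional normed space with a direct sum decomposition V = E ⊕ F, and let A : V → V be a linear isomorphism preserving the decomposition (A(E) = E, A(F) = F). Suppose there are constants C > 0 and ρ ∈ (0,1) such that ‖Aⁿ|_E‖ · ‖(Aⁿ|_F)^{-1}‖ ≤ C ρⁿ for all n ∈ ℕ. Then for every nonzero v ∈ E and w ∈ F, limsup_{n→∞} (1/n) log ‖Aⁿ v‖ ≤ liminf_{n→∞} (1/n) log ‖Aⁿ w‖ − log(1/ρ); in particular every Lyapunov exponent of A along E is strictly smaller than every Lyapunov exponent along F. -/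
open Filter Topology

section AuxLemmas

open Polynomial

section Cx
variable {W : Type*} [NormedAddCommGroup W] [NormedSpace ℂ W] [FiniteDimensional ℂ W]

lemma pow_apply_formula (T : W →ₗ[ℂ] W) (v : W) (lam : ℂ) (n : ℕ) :
    (T ^ n) v = lam ^ n • v
      + ∑ k ∈ Finset.range n, lam ^ (n - 1 - k) • (T ^ k) (T v - lam • v) := by
  induction n with
  | zero => simp
  | succ n ih =>
    have h1 : (T ^ (n+1)) v = T ((T ^ n) v) := by
      rw [pow_succ', Module.End.mul_apply]
    rw [h1, ih]
    rw [Finset.sum_range_succ' (fun k => lam ^ (n + 1 - 1 - k) • (T ^ k) (T v - lam • v)) n]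
    simp only [map_add, map_smul, map_sum]
    have h2 : lam ^ n • T v = lam ^ (n+1) • v + lam ^ n • (T v - lam • v) := by
      rw [smul_sub, pow_succ, mul_smul]; abel
    rw [h2]
    have h3 : ∀ k ∈ Finset.range n,
        lam ^ (n - 1 - k) • T ((T ^ k) (T v - lam • v))
          = lam ^ (n + 1 - 1 - (k+1)) • (T ^ (k+1)) (T v - lam • v) := by
      intro k hk
      rw [show n + 1 - 1 - (k+1) = n - 1 - k by omega, pow_succ', Module.End.mul_apply]
    rw [Finset.sum_congr rfl h3]
    simp only [Nat.add_sub_cancel, Nat.sub_zero, pow_zero, one_smul, Module.End.one_apply]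
    abel

lemma upper_bound (T : W →ₗ[ℂ] W) (d : ℕ) :
    ∀ (p : ℂ[X]), p ≠ 0 → p.natDegree ≤ d → ∀ (v : W), (aeval T p) v = 0 →
    ∀ s : ℝ, 0 < s → (∀ z ∈ p.roots, ‖z‖ ≤ s) →
    ∃ C : ℝ, 0 < C ∧ ∀ n : ℕ, ‖(T ^ n) v‖ ≤ C * (n+1 : ℝ) ^ d * s ^ n := by
  induction d with
  | zero =>
    intro p hp hdeg v hv s hs hroots
    have hv0 : v = 0 := by
      have hpC : p = Polynomial.C (p.coeff 0) :=
        Polynomial.eq_C_of_natDegree_eq_zero (Nat.le_zero.mp hdeg)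
      have hc : p.coeff 0 ≠ 0 := fun h => hp (by rw [hpC, h, map_zero])
      have : (p.coeff 0) • v = 0 := by
        rw [hpC] at hv; simpa using hv
      exact (smul_eq_zero.mp this).resolve_left hc
    exact ⟨1, one_pos, fun n => by
      simp only [hv0, map_zero, norm_zero]; positivity⟩
  | succ d ih =>
    intro p hp hdeg v hv s hs hroots
    by_cases hdeg0 : p.natDegree = 0
    · -- same as base case
      have hv0 : v = 0 := by
        have hpC : p = Polynomial.C (p.coeff 0) := Polynomial.eq_C_of_natDegree_eq_zero hdeg0
        have hc : p.coeff 0 ≠ 0 := fun h => hp (by rw [hpC, h, map_zero])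
        have : (p.coeff 0) • v = 0 := by rw [hpC] at hv; simpa using hv
        exact (smul_eq_zero.mp this).resolve_left hc
      exact ⟨1, one_pos, fun n => by
        simp only [hv0, map_zero, norm_zero]; positivity⟩
    · -- get a root
      obtain ⟨lam, hlam⟩ := Complex.exists_root
        (Polynomial.natDegree_pos_iff_degree_pos.mp (by omega) : 0 < p.degree)
      have hlam_le : ‖lam‖ ≤ s := hroots lam (Polynomial.mem_roots'.mpr ⟨hp, hlam⟩)
      obtain ⟨q, hq⟩ := Polynomial.dvd_iff_isRoot.mpr hlam
      have hpq : p = q * (X - C lam) := by rw [hq, mul_comm]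
      have hq0 : q ≠ 0 := by
        intro h; rw [h, zero_mul] at hpq; exact hp hpq
      have hqdeg : q.natDegree ≤ d := by
        have h1 : p.natDegree = q.natDegree + 1 := by
          rw [hpq, Polynomial.natDegree_mul hq0 (Polynomial.X_sub_C_ne_zero lam),
            Polynomial.natDegree_X_sub_C]
        omega
      have hqroots : ∀ z ∈ q.roots, ‖z‖ ≤ s := fun z hz =>
        hroots z (Multiset.mem_of_le (Polynomial.roots.le_of_dvd hp ⟨X - C lam, hpq⟩) hz)
      set w : W := T v - lam • v with hw_def
      have hw : (aeval T q) w = 0 := by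
        have h1 : (aeval T (X - C lam)) v = w := by
          simp [map_sub, Polynomial.aeval_X, Polynomial.aeval_C, Module.algebraMap_end_apply,
            hw_def]
        have h2 : (aeval T q) ((aeval T (X - C lam)) v) = 0 := by
          rw [← Module.End.mul_apply, ← map_mul, ← hpq]; exact hv
        rwa [h1] at h2
      obtain ⟨C₁, hC₁, hbd⟩ := ih q hq0 hqdeg w hw s hs hqroots
      refine ⟨‖v‖ + C₁/s + 1, by positivity, fun n => ?_⟩
      have key := pow_apply_formula T v lam n
      rw [← hw_def] at key
      have hterm : ∀ k ∈ Finset.range n,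
          ‖lam ^ (n - 1 - k) • (T ^ k) w‖ ≤ C₁ * (n+1:ℝ)^d * s^(n-1) := by
        intro k hk
        have hk' : k < n := Finset.mem_range.mp hk
        rw [norm_smul, norm_pow]
        calc ‖lam‖ ^ (n-1-k) * ‖(T ^ k) w‖
            ≤ s ^ (n-1-k) * (C₁ * (k+1:ℝ)^d * s^k) :=
              mul_le_mul (pow_le_pow_left₀ (norm_nonneg _) hlam_le _) (hbd k)
                (norm_nonneg _) (by positivity)
          _ = C₁ * (k+1:ℝ)^d * s^(n-1) := by
              have hpw : s^(n-1-k) * s^k = s^(n-1) := by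
                rw [← pow_add]; congr 1; omega
              rw [← hpw]; ring
          _ ≤ C₁ * (n+1:ℝ)^d * s^(n-1) := by
              have hkn : (k+1:ℝ) ≤ (n+1:ℝ) := by
                have := (Nat.cast_le (α := ℝ)).mpr hk'.le; linarith
              have := pow_le_pow_left₀ (by positivity : (0:ℝ) ≤ (k+1:ℝ)) hkn d
              have hsn : (0:ℝ) ≤ s^(n-1) := by positivity
              exact mul_le_mul_of_nonneg_right (mul_le_mul_of_nonneg_left this hC₁.le) hsn
      calc ‖(T ^ n) v‖ ≤ ‖lam ^ n • v‖ + ‖∑ k ∈ Finset.range n, lam ^ (n-1-k) • (T ^ k) w‖ := by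
            rw [key]; exact norm_add_le _ _
        _ ≤ s^n * ‖v‖ + ∑ k ∈ Finset.range n, ‖lam ^ (n-1-k) • (T ^ k) w‖ :=
            add_le_add (by
              rw [norm_smul, norm_pow]
              exact mul_le_mul_of_nonneg_right
                (pow_le_pow_left₀ (norm_nonneg _) hlam_le n) (norm_nonneg v))
              (norm_sum_le _ _)
        _ ≤ s^n * ‖v‖ + ∑ k ∈ Finset.range n, C₁ * (n+1:ℝ)^d * s^(n-1) :=
            add_le_add le_rfl (Finset.sum_le_sum hterm)
        _ = s^n * ‖v‖ + n * (C₁ * (n+1:ℝ)^d * s^(n-1)) := by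
            rw [Finset.sum_const, Finset.card_range, nsmul_eq_mul]
        _ ≤ (‖v‖ + C₁/s + 1) * (n+1:ℝ)^(d+1) * s^n := by
            rcases n with _ | m
            · simp only [Nat.cast_zero, pow_zero, zero_mul, add_zero, zero_add, one_mul,
                mul_one, one_pow]
              nlinarith [norm_nonneg v, div_pos hC₁ hs]
            · rw [Nat.add_sub_cancel]
              push_cast
              have hc : (C₁/s) * s = C₁ := div_mul_cancel₀ _ hs.ne'
              set X : ℝ := (m:ℝ) + 1 + 1 with hX_def
              have hX1 : (1:ℝ) ≤ X := by simp [hX_def]; positivity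
              have hXd : (1:ℝ) ≤ X^d := one_le_pow₀ hX1
              rw [pow_succ s m, pow_succ X d]
              have hsm : (0:ℝ) < s^m := pow_pos hs m
              have h2 : ((m:ℝ)+1) * (C₁ * X^d * s^m) ≤ (C₁/s) * (X^d * X) * (s^m * s) := by
                have expand : (C₁/s) * (X^d * X) * (s^m * s) = C₁ * X^d * X * s^m * ((C₁/s)*s/C₁) := by
                  field_simp
                rw [expand, hc]
                rw [div_self hC₁.ne', mul_one]
                nlinarith [mul_pos (mul_pos hC₁ (lt_of_lt_of_le one_pos hXd)) hsm]
              have h3 : s^m * s * ‖v‖ ≤ ‖v‖ * (X^d * X) * (s^m * s) := by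
                nlinarith [mul_nonneg (norm_nonneg v) (mul_pos hsm hs).le,
                  one_le_mul_of_one_le_of_one_le hXd hX1]
              have hP : (0:ℝ) < (X^d*X)*(s^m*s) := by positivity
              calc s^m*s*‖v‖ + ((m:ℝ)+1) * (C₁ * X^d * s^m)
                  ≤ ‖v‖*(X^d*X)*(s^m*s) + (C₁/s)*(X^d*X)*(s^m*s) := add_le_add h3 h2
                _ ≤ (‖v‖ + C₁/s + 1)*(X^d*X)*(s^m*s) := by nlinarith [hP]

lemma tendsto_log_succ_div : Tendsto (fun n : ℕ => Real.log ((n:ℝ)+1) * (n:ℝ)⁻¹) atTop (𝓝 0) := by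
  have h1 : Tendsto (fun x : ℝ => Real.log x / x) atTop (𝓝 0) :=
    Real.isLittleO_log_id_atTop.tendsto_div_nhds_zero
  have h2 : Tendsto (fun n : ℕ => (n:ℝ)+1) atTop atTop :=
    tendsto_atTop_add_const_right _ 1 tendsto_natCast_atTop_atTop
  have hA : Tendsto (fun n : ℕ => Real.log ((n:ℝ)+1)/((n:ℝ)+1)) atTop (𝓝 0) := h1.comp h2
  have hB : Tendsto (fun n : ℕ => ((n:ℝ)+1) * (n:ℝ)⁻¹) atTop (𝓝 1) := by
    have : Tendsto (fun n : ℕ => 1 + (n:ℝ)⁻¹) atTop (𝓝 (1+0)) :=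
      tendsto_const_nhds.add tendsto_inv_atTop_nhds_zero_nat
    rw [add_zero] at this
    apply this.congr'
    filter_upwards [eventually_ge_atTop 1] with n hn
    have hn0 : (n:ℝ) ≠ 0 := Nat.cast_ne_zero.mpr (by omega)
    field_simp
  have := hA.mul hB
  rw [zero_mul] at this
  apply this.congr'
  filter_upwards [eventually_ge_atTop 1] with n hn
  have hn0 : (n:ℝ) ≠ 0 := Nat.cast_ne_zero.mpr (by omega)
  field_simp


lemma cx_tendsto (T : W →ₗ[ℂ] W) (hT : Function.Injective T) (u : W) (hu : u ≠ 0) :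
    ∃ L : ℝ, Tendsto (fun n : ℕ => (n:ℝ)⁻¹ * Real.log ‖(T ^ n) u‖) atTop (𝓝 L) := by
  -- injectivity of powers
  have hTn : ∀ n : ℕ, Function.Injective (T ^ n : W →ₗ[ℂ] W) := by
    intro n; induction n with
    | zero => intro x y h; simpa using h
    | succ n ih =>
      intro x y h
      rw [pow_succ, Module.End.mul_apply, Module.End.mul_apply] at h
      exact hT (ih h)
  have hpos : ∀ n : ℕ, 0 < ‖(T ^ n) u‖ := fun n =>
    norm_pos_iff.mpr (fun h => hu (hTn n (by simpa using h)))
  -- minimal annihilating polynomial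
  have hP : ∃ k, ∃ g : ℂ[X], g ≠ 0 ∧ g.natDegree = k ∧ (aeval T g) u = 0 :=
    ⟨T.charpoly.natDegree, T.charpoly, T.charpoly_monic.ne_zero, rfl, by
      rw [LinearMap.aeval_self_charpoly]; rfl⟩
  classical
  obtain ⟨p, hp0, hpk, hpu⟩ := Nat.find_spec hP
  have hmin : ∀ g : ℂ[X], g ≠ 0 → (aeval T g) u = 0 → Nat.find hP ≤ g.natDegree :=
    fun g hg hgu => Nat.find_min' hP ⟨g, hg, rfl, hgu⟩
  have hdeg1 : 1 ≤ p.natDegree := by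
    by_contra h
    have h0 : p.natDegree = 0 := by omega
    have hpC : p = Polynomial.C (p.coeff 0) := Polynomial.eq_C_of_natDegree_eq_zero h0
    have hc : p.coeff 0 ≠ 0 := fun hh => hp0 (by rw [hpC, hh, map_zero])
    have : (p.coeff 0) • u = 0 := by rw [hpC] at hpu; simpa using hpu
    exact hu ((smul_eq_zero.mp this).resolve_left hc)
  -- maximal modulus root
  obtain ⟨z₀, hz₀⟩ := Complex.exists_root
    (Polynomial.natDegree_pos_iff_degree_pos.mp (by omega) : 0 < p.degree)
  obtain ⟨μ, hμmem, hμmax⟩ := Finset.exists_max_image p.roots.toFinset (fun z : ℂ => ‖z‖)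
    ⟨z₀, Multiset.mem_toFinset.mpr (Polynomial.mem_roots'.mpr ⟨hp0, hz₀⟩)⟩
  have hμroot : p.IsRoot μ := (Polynomial.mem_roots'.mp (Multiset.mem_toFinset.mp hμmem)).2
  have hroots : ∀ z ∈ p.roots, ‖z‖ ≤ ‖μ‖ := fun z hz =>
    hμmax z (Multiset.mem_toFinset.mpr hz)
  have hμ0 : μ ≠ 0 := by
    intro hμ
    rw [hμ] at hμroot
    have hcoeff : p.coeff 0 = 0 := by
      rw [Polynomial.coeff_zero_eq_eval_zero]; exact hμroot
    obtain ⟨g, hg⟩ : (X : ℂ[X]) ∣ p := Polynomial.X_dvd_iff.mpr hcoeff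
    have hg0 : g ≠ 0 := fun h => hp0 (by rw [hg, h, mul_zero])
    have hgu : (aeval T g) u = 0 := by
      apply hT
      have : (aeval T p) u = T ((aeval T g) u) := by
        rw [hg, map_mul, Module.End.mul_apply, Polynomial.aeval_X]
      rw [← this, hpu, map_zero]
    have := hmin g hg0 hgu
    have hdg : g.natDegree = p.natDegree - 1 := by
      rw [hg, Polynomial.natDegree_mul Polynomial.X_ne_zero hg0, Polynomial.natDegree_X]
      omega
    omega
  set r : ℝ := ‖μ‖ with hr_def
  have hr : 0 < r := norm_pos_iff.mpr hμ0
  -- upper bound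
  obtain ⟨C, hC, hCb⟩ := upper_bound T p.natDegree p hp0 le_rfl u hpu r hr hroots
  -- lower bound
  obtain ⟨c, hpc⟩ := Polynomial.dvd_iff_isRoot.mpr hμroot
  set u' : W := (aeval T c) u with hu'_def
  have hc0 : c ≠ 0 := fun h => hp0 (by rw [hpc, h, mul_zero])
  have hu' : u' ≠ 0 := by
    intro h
    have := hmin c hc0 h
    have hdc : c.natDegree = p.natDegree - 1 := by
      rw [hpc, Polynomial.natDegree_mul (Polynomial.X_sub_C_ne_zero μ) hc0,
        Polynomial.natDegree_X_sub_C] at *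
      omega
    omega
  have hTu' : T u' = μ • u' := by
    have h1 : (aeval T p) u = T u' - μ • u' := by
      rw [hpc, map_mul, Module.End.mul_apply]
      simp [hu'_def, Module.algebraMap_end_apply, sub_smul]
    have := h1.symm.trans hpu
    rwa [sub_eq_zero] at this
  have hTnu' : ∀ n : ℕ, (T ^ n) u' = μ ^ n • u' := by
    intro n; induction n with
    | zero => simp
    | succ n ih =>
      rw [pow_succ', Module.End.mul_apply, ih, map_smul, hTu', smul_smul, ← pow_succ]
  have hcomm : ∀ n : ℕ, (aeval T c) ((T ^ n) u) = (T ^ n) u' := by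
    intro n
    have h1 : aeval T c * T ^ n = T ^ n * aeval T c := by
      calc aeval T c * T ^ n = aeval T (c * X ^ n) := by rw [map_mul, map_pow, aeval_X]
        _ = aeval T (X ^ n * c) := by rw [mul_comm]
        _ = T ^ n * aeval T c := by rw [map_mul, map_pow, aeval_X]
    have := congrArg (fun f : W →ₗ[ℂ] W => f u) h1
    simpa [Module.End.mul_apply, hu'_def] using this
  set G := LinearMap.toContinuousLinearMap (aeval T c) with hG_def
  have hGapp : ∀ x : W, (aeval T c) x = G x := fun x => rfl
  have hGnorm : 0 < ‖G‖ := by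
    by_contra h
    push_neg at h
    have h0 : ‖G‖ = 0 := le_antisymm h (norm_nonneg _)
    apply hu'
    have : ‖u'‖ ≤ ‖G‖ * ‖u‖ := by rw [hu'_def, hGapp]; exact G.le_opNorm u
    rw [h0, zero_mul] at this
    exact norm_le_zero_iff.mp this
  have hlower : ∀ n : ℕ, r ^ n * ‖u'‖ ≤ ‖G‖ * ‖(T ^ n) u‖ := by
    intro n
    calc r ^ n * ‖u'‖ = ‖μ ^ n • u'‖ := by
          rw [norm_smul, norm_pow]
      _ = ‖(aeval T c) ((T ^ n) u)‖ := by rw [hcomm, hTnu']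
      _ ≤ ‖G‖ * ‖(T ^ n) u‖ := by rw [hGapp]; exact G.le_opNorm _
  -- conclude
  refine ⟨Real.log r, ?_⟩
  have hu'pos : 0 < ‖u'‖ := norm_pos_iff.mpr hu'
  apply tendsto_of_tendsto_of_tendsto_of_le_of_le'
    (g := fun n : ℕ => Real.log r + Real.log (‖u'‖/‖G‖) * (n:ℝ)⁻¹)
    (h := fun n : ℕ => Real.log r + Real.log C * (n:ℝ)⁻¹
      + (p.natDegree : ℝ) * (Real.log ((n:ℝ)+1) * (n:ℝ)⁻¹))
  · have : Tendsto (fun n : ℕ => Real.log r + Real.log (‖u'‖/‖G‖) * (n:ℝ)⁻¹) atTop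
        (𝓝 (Real.log r + Real.log (‖u'‖/‖G‖) * 0)) :=
      tendsto_const_nhds.add (tendsto_const_nhds.mul tendsto_inv_atTop_nhds_zero_nat)
    simpa using this
  · have : Tendsto (fun n : ℕ => Real.log r + Real.log C * (n:ℝ)⁻¹
        + (p.natDegree : ℝ) * (Real.log ((n:ℝ)+1) * (n:ℝ)⁻¹)) atTop
        (𝓝 (Real.log r + Real.log C * 0 + (p.natDegree : ℝ) * 0)) :=
      (tendsto_const_nhds.add (tendsto_const_nhds.mul tendsto_inv_atTop_nhds_zero_nat)).add
        (tendsto_const_nhds.mul tendsto_log_succ_div)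
    simpa using this
  · filter_upwards [eventually_ge_atTop 1] with n hn
    have hn0 : (n:ℝ) ≠ 0 := Nat.cast_ne_zero.mpr (by omega)
    have hninv : (0:ℝ) ≤ (n:ℝ)⁻¹ := by positivity
    have h1 : r ^ n * (‖u'‖/‖G‖) ≤ ‖(T ^ n) u‖ := by
      rw [← mul_div_assoc, div_le_iff₀ hGnorm]
      linarith [hlower n]
    have h2 : Real.log (r ^ n * (‖u'‖/‖G‖)) ≤ Real.log ‖(T ^ n) u‖ :=
      Real.log_le_log (by positivity) h1
    rw [Real.log_mul (by positivity) (by positivity), Real.log_pow] at h2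
    have h3 : (n:ℝ)⁻¹ * ((n:ℝ) * Real.log r + Real.log (‖u'‖/‖G‖))
        ≤ (n:ℝ)⁻¹ * Real.log ‖(T ^ n) u‖ := by
      apply mul_le_mul_of_nonneg_left h2 hninv
    calc Real.log r + Real.log (‖u'‖/‖G‖) * (n:ℝ)⁻¹
        = (n:ℝ)⁻¹ * ((n:ℝ) * Real.log r + Real.log (‖u'‖/‖G‖)) := by
          field_simp
      _ ≤ (n:ℝ)⁻¹ * Real.log ‖(T ^ n) u‖ := h3
  · filter_upwards [eventually_ge_atTop 1] with n hn
    have hn0 : (n:ℝ) ≠ 0 := Nat.cast_ne_zero.mpr (by omega)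
    have hninv : (0:ℝ) ≤ (n:ℝ)⁻¹ := by positivity
    have h2 : Real.log ‖(T ^ n) u‖ ≤ Real.log (C * ((n:ℝ)+1) ^ p.natDegree * r ^ n) :=
      Real.log_le_log (hpos n) (hCb n)
    rw [Real.log_mul (by positivity) (by positivity),
      Real.log_mul (by positivity) (by positivity), Real.log_pow, Real.log_pow] at h2
    have h3 := mul_le_mul_of_nonneg_left h2 hninv
    calc (n:ℝ)⁻¹ * Real.log ‖(T ^ n) u‖
        ≤ (n:ℝ)⁻¹ * (Real.log C + (p.natDegree:ℝ) * Real.log ((n:ℝ)+1)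
            + (n:ℝ) * Real.log r) := h3
      _ = Real.log r + Real.log C * (n:ℝ)⁻¹
          + (p.natDegree : ℝ) * (Real.log ((n:ℝ)+1) * (n:ℝ)⁻¹) := by
          field_simp; ring

end Cx

section RealCase
variable {V : Type*} [NormedAddCommGroup V] [NormedSpace ℝ V] [FiniteDimensional ℝ V]

lemma real_tendsto (A : V →ₗ[ℝ] V) (hbij : Function.Bijective A) (v : V) (hv : v ≠ 0) :
    ∃ L : ℝ, Tendsto (fun n : ℕ => (n:ℝ)⁻¹ * Real.log ‖(A ^ n) v‖) atTop (𝓝 L) := by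
  classical
  set d := Module.finrank ℝ V with hd
  let b : Module.Basis (Fin d) ℝ V := Module.finBasis ℝ V
  set M : Matrix (Fin d) (Fin d) ℝ := LinearMap.toMatrix b b A with hM
  set e : V ≃ₗ[ℝ] (Fin d → ℝ) := b.equivFun with he
  -- powers of matrices
  have hMn : ∀ n : ℕ, LinearMap.toMatrix b b (A ^ n) = M ^ n := by
    intro n; induction n with
    | zero => simp [LinearMap.toMatrix_one]
    | succ n ih => rw [pow_succ, pow_succ, ← ih, ← LinearMap.toMatrix_mul]
  have hmv : ∀ n : ℕ, (M ^ n).mulVec (e v) = e ((A ^ n) v) := by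
    intro n
    rw [← hMn n]
    have := LinearMap.toMatrix_mulVec_repr b b (A ^ n) v
    simpa [he, Module.Basis.equivFun_apply] using this
  -- complexified matrix
  set N : Matrix (Fin d) (Fin d) ℂ := Complex.ofRealHom.mapMatrix M with hN
  set T : (Fin d → ℂ) →ₗ[ℂ] (Fin d → ℂ) := Matrix.toLinAlgEquiv' N with hT
  let ι : (Fin d → ℝ) → (Fin d → ℂ) := fun x i => (x i : ℂ)
  have hmul : ∀ (Q : Matrix (Fin d) (Fin d) ℝ) (x : Fin d → ℝ),
      (Complex.ofRealHom.mapMatrix Q).mulVec (ι x) = ι (Q.mulVec x) := by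
    intro Q x
    funext i
    simp only [Matrix.mulVec, dotProduct, RingHom.mapMatrix_apply, Matrix.map_apply, ι]
    push_cast
    rfl
  have hnormι : ∀ x : Fin d → ℝ, ‖ι x‖ = ‖x‖ := by
    intro x
    rw [Pi.norm_def, Pi.norm_def]
    congr 1
    apply Finset.sup_congr rfl
    intro i _
    simp [ι]
  have hTpow : ∀ n : ℕ, (T ^ n : (Fin d → ℂ) →ₗ[ℂ] (Fin d → ℂ)) =
      Matrix.toLinAlgEquiv' (Complex.ofRealHom.mapMatrix (M ^ n)) := by
    intro n
    rw [hT, ← map_pow, ← map_pow]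
  have hTn_apply : ∀ n : ℕ, (T ^ n) (ι (e v)) = ι (e ((A ^ n) v)) := by
    intro n
    rw [hTpow n, Matrix.toLinAlgEquiv'_apply, hmul, hmv]
  -- T injective
  have hdet : N.det ≠ 0 := by
    rw [hN, ← RingHom.map_det]
    have h1 : M.det = LinearMap.det A := LinearMap.det_toMatrix b A
    have h2 : IsUnit (LinearMap.det A) := by
      have := LinearEquiv.isUnit_det' (LinearEquiv.ofBijective A hbij)
      exact this
    rw [h1]
    simpa using h2.ne_zero
  have hTinj : Function.Injective T := by
    intro x y hxy
    rw [hT, Matrix.toLinAlgEquiv'_apply, Matrix.toLinAlgEquiv'_apply] at hxy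
    have h1 := congrArg (N⁻¹.mulVec) hxy
    rwa [Matrix.mulVec_mulVec, Matrix.mulVec_mulVec,
      Matrix.nonsing_inv_mul N (isUnit_iff_ne_zero.mpr hdet), Matrix.one_mulVec,
      Matrix.one_mulVec] at h1
  -- u ≠ 0
  have hu : ι (e v) ≠ 0 := by
    intro h
    apply hv
    have h1 : e v = 0 := by
      funext i
      have := congrFun h i
      simpa [ι, Complex.ofReal_eq_zero] using this
    have := e.map_eq_zero_iff.mp h1
    exact this
  obtain ⟨L, hL⟩ := cx_tendsto T hTinj (ι (e v)) hu
  -- norm comparison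
  set E : V ≃L[ℝ] (Fin d → ℝ) := e.toContinuousLinearEquiv with hE
  set K₁ : ℝ := ‖(E.symm : (Fin d → ℝ) →L[ℝ] V)‖ + 1 with hK₁
  set K₂ : ℝ := ‖(E : V →L[ℝ] (Fin d → ℝ))‖ + 1 with hK₂
  have hK₁0 : 0 < K₁ := by positivity
  have hK₂0 : 0 < K₂ := by positivity
  have hEb : ∀ x : V, ‖e x‖ ≤ K₂ * ‖x‖ := by
    intro x
    calc ‖e x‖ = ‖(E : V →L[ℝ] (Fin d → ℝ)) x‖ := rfl
      _ ≤ ‖(E : V →L[ℝ] (Fin d → ℝ))‖ * ‖x‖ := ContinuousLinearMap.le_opNorm _ _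
      _ ≤ K₂ * ‖x‖ := by
          apply mul_le_mul_of_nonneg_right _ (norm_nonneg x)
          rw [hK₂]; linarith
  have hEb' : ∀ x : V, ‖x‖ ≤ K₁ * ‖e x‖ := by
    intro x
    calc ‖x‖ = ‖(E.symm : (Fin d → ℝ) →L[ℝ] V) (e x)‖ := by
          congr 1
          exact (E.symm_apply_apply x).symm
      _ ≤ ‖(E.symm : (Fin d → ℝ) →L[ℝ] V)‖ * ‖e x‖ := ContinuousLinearMap.le_opNorm _ _
      _ ≤ K₁ * ‖e x‖ := by
          apply mul_le_mul_of_nonneg_right _ (norm_nonneg _)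
          rw [hK₁]; linarith
  -- positivity of orbits
  have hAn : ∀ n : ℕ, Function.Bijective (A ^ n : V →ₗ[ℝ] V) := by
    intro n; induction n with
    | zero => exact ⟨fun x y h => by simpa using h, fun y => ⟨y, by simp⟩⟩
    | succ n ih =>
      rw [pow_succ]
      constructor
      · intro x y h
        rw [Module.End.mul_apply, Module.End.mul_apply] at h
        exact hbij.1 (ih.1 h)
      · intro y
        obtain ⟨z, hz⟩ := ih.2 y
        obtain ⟨x, hx⟩ := hbij.2 z
        exact ⟨x, by rw [Module.End.mul_apply, hx, hz]⟩
  have hxpos : ∀ n : ℕ, 0 < ‖(A ^ n) v‖ := fun n =>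
    norm_pos_iff.mpr (fun h => hv ((hAn n).1 (by simpa using h)))
  have hypos : ∀ n : ℕ, 0 < ‖e ((A ^ n) v)‖ := by
    intro n
    apply norm_pos_iff.mpr
    intro h
    exact (hxpos n).ne' (by rw [e.map_eq_zero_iff.mp h, norm_zero])
  -- the difference tends to zero
  set K : ℝ := max (Real.log K₁) (Real.log K₂) with hK
  have hdiff : ∀ n : ℕ, |(n:ℝ)⁻¹ * Real.log ‖(A ^ n) v‖
      - (n:ℝ)⁻¹ * Real.log ‖(T ^ n) (ι (e v))‖| ≤ K * (n:ℝ)⁻¹ := by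
    intro n
    have hy : ‖(T ^ n) (ι (e v))‖ = ‖e ((A ^ n) v)‖ := by rw [hTn_apply n, hnormι]
    rw [hy]
    have hlog1 : Real.log ‖(A ^ n) v‖ - Real.log ‖e ((A ^ n) v)‖ ≤ Real.log K₁ := by
      have := Real.log_le_log (hxpos n) (hEb' ((A ^ n) v))
      rw [Real.log_mul hK₁0.ne' (hypos n).ne'] at this
      linarith
    have hlog2 : Real.log ‖e ((A ^ n) v)‖ - Real.log ‖(A ^ n) v‖ ≤ Real.log K₂ := by
      have := Real.log_le_log (hypos n) (hEb ((A ^ n) v))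
      rw [Real.log_mul hK₂0.ne' (hxpos n).ne'] at this
      linarith
    have hninv : (0:ℝ) ≤ (n:ℝ)⁻¹ := by positivity
    rw [← mul_sub, abs_mul, abs_of_nonneg hninv, mul_comm]
    apply mul_le_mul_of_nonneg_right _ hninv
    rw [abs_le]
    constructor
    · have : Real.log K₂ ≤ K := le_max_right _ _
      linarith
    · have : Real.log K₁ ≤ K := le_max_left _ _
      linarith
  have hdiff0 : Tendsto (fun n : ℕ => (n:ℝ)⁻¹ * Real.log ‖(A ^ n) v‖
      - (n:ℝ)⁻¹ * Real.log ‖(T ^ n) (ι (e v))‖) atTop (𝓝 0) := by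
    apply squeeze_zero_norm (fun n => hdiff n)
    have : Tendsto (fun n : ℕ => K * (n:ℝ)⁻¹) atTop (𝓝 (K * 0)) :=
      tendsto_const_nhds.mul tendsto_inv_atTop_nhds_zero_nat
    simpa using this
  refine ⟨L, ?_⟩
  have := hL.add hdiff0
  rw [add_zero] at this
  apply this.congr
  intro n
  ring

end RealCase

end AuxLemmas

/-- Dominated splitting: if `‖Aⁿ|_E‖ · ‖(Aⁿ|_F)⁻¹‖ ≤ C ρⁿ` (stated pointwise:
`‖Aⁿ v‖ / ‖v‖ ≤ C ρⁿ ‖Aⁿ w‖ / ‖w‖` for `v ∈ E`, `w ∈ F`), then every Lyapunov exponent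
along `E` is at most every Lyapunov exponent along `F` minus `log (1/ρ)`. -/
theorem stmt14 {V : Type*} [NormedAddCommGroup V] [NormedSpace ℝ V]
    [FiniteDimensional ℝ V]
    (E F : Submodule ℝ V) (hEF : E ⊓ F = ⊥) (hsup : E ⊔ F = ⊤)
    (A : V →ₗ[ℝ] V) (hbij : Function.Bijective A)
    (hAE : ∀ v ∈ E, A v ∈ E) (hAF : ∀ w ∈ F, A w ∈ F)
    (C ρ : ℝ) (hC : 0 < C) (hρ : ρ ∈ Set.Ioo (0 : ℝ) 1)
    (hdom : ∀ n : ℕ, ∀ v ∈ E, ∀ w ∈ F,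
      ‖(A ^ n) v‖ * ‖w‖ ≤ C * ρ ^ n * (‖v‖ * ‖(A ^ n) w‖)) :
    ∀ v ∈ E, v ≠ 0 → ∀ w ∈ F, w ≠ 0 →
      Filter.limsup (fun n : ℕ => (n : ℝ)⁻¹ * Real.log ‖(A ^ n) v‖) atTop ≤
        Filter.liminf (fun n : ℕ => (n : ℝ)⁻¹ * Real.log ‖(A ^ n) w‖) atTop
          - Real.log (1 / ρ) := by
  intro v hvE hv w hwF hw
  obtain ⟨hρ0, hρ1⟩ := hρ
  obtain ⟨L₁, hL₁⟩ := real_tendsto A hbij v hv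
  obtain ⟨L₂, hL₂⟩ := real_tendsto A hbij w hw
  rw [hL₁.limsup_eq, hL₂.liminf_eq]
  rw [one_div, Real.log_inv]
  rw [sub_neg_eq_add]
  -- suffices L₁ ≤ L₂ + log ρ
  have hAn : ∀ n : ℕ, Function.Bijective (A ^ n : V →ₗ[ℝ] V) := by
    intro n; induction n with
    | zero => exact ⟨fun x y h => by simpa using h, fun y => ⟨y, by simp⟩⟩
    | succ n ih =>
      rw [pow_succ]
      exact ⟨fun x y h => hbij.1 (ih.1 h), fun y => by
        obtain ⟨z, hz⟩ := ih.2 y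
        obtain ⟨x, hx⟩ := hbij.2 z
        exact ⟨x, by rw [Module.End.mul_apply, hx, hz]⟩⟩
  have hvpos : ∀ n : ℕ, 0 < ‖(A ^ n) v‖ := fun n =>
    norm_pos_iff.mpr (fun h => hv ((hAn n).1 (by simpa using h)))
  have hwpos : ∀ n : ℕ, 0 < ‖(A ^ n) w‖ := fun n =>
    norm_pos_iff.mpr (fun h => hw ((hAn n).1 (by simpa using h)))
  have hv0 : 0 < ‖v‖ := norm_pos_iff.mpr hv
  have hw0 : 0 < ‖w‖ := norm_pos_iff.mpr hw
  have key : L₁ - L₂ ≤ Real.log ρ := by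
    apply le_of_tendsto_of_tendsto (hL₁.sub hL₂)
      (f := fun n : ℕ => (n:ℝ)⁻¹ * Real.log ‖(A ^ n) v‖ - (n:ℝ)⁻¹ * Real.log ‖(A ^ n) w‖)
      (g := fun n : ℕ => (Real.log C + Real.log ‖v‖ - Real.log ‖w‖) * (n:ℝ)⁻¹ + Real.log ρ)
    · have : Tendsto (fun n : ℕ => (Real.log C + Real.log ‖v‖ - Real.log ‖w‖) * (n:ℝ)⁻¹
          + Real.log ρ) atTop (𝓝 ((Real.log C + Real.log ‖v‖ - Real.log ‖w‖) * 0 + Real.log ρ)) :=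
        (tendsto_const_nhds.mul tendsto_inv_atTop_nhds_zero_nat).add tendsto_const_nhds
      simpa using this
    · filter_upwards [eventually_ge_atTop 1] with n hn
      have hn0 : (n:ℝ) ≠ 0 := Nat.cast_ne_zero.mpr (by omega)
      have hninv : (0:ℝ) ≤ (n:ℝ)⁻¹ := by positivity
      have h1 := hdom n v hvE w hwF
      have h2 : Real.log (‖(A ^ n) v‖ * ‖w‖) ≤ Real.log (C * ρ ^ n * (‖v‖ * ‖(A ^ n) w‖)) :=
        Real.log_le_log (mul_pos (hvpos n) hw0) h1
      rw [Real.log_mul (hvpos n).ne' hw0.ne', Real.log_mul (mul_pos hC (pow_pos hρ0 n)).ne' (mul_pos hv0 (hwpos n)).ne',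
        Real.log_mul hC.ne' (pow_pos hρ0 n).ne', Real.log_mul hv0.ne' (hwpos n).ne',
        Real.log_pow] at h2
      have h3 := mul_le_mul_of_nonneg_left h2 hninv
      have h4 : (n:ℝ)⁻¹ * (n:ℝ) = 1 := inv_mul_cancel₀ hn0
      calc (n:ℝ)⁻¹ * Real.log ‖(A ^ n) v‖ - (n:ℝ)⁻¹ * Real.log ‖(A ^ n) w‖
          = (n:ℝ)⁻¹ * (Real.log ‖(A ^ n) v‖ + Real.log ‖w‖)
            - (n:ℝ)⁻¹ * Real.log ‖(A ^ n) w‖ - (n:ℝ)⁻¹ * Real.log ‖w‖ := by ring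
        _ ≤ (n:ℝ)⁻¹ * (Real.log C + (n:ℝ) * Real.log ρ + (Real.log ‖v‖ + Real.log ‖(A ^ n) w‖))
            - (n:ℝ)⁻¹ * Real.log ‖(A ^ n) w‖ - (n:ℝ)⁻¹ * Real.log ‖w‖ := by linarith
        _ = (Real.log C + Real.log ‖v‖ - Real.log ‖w‖) * (n:ℝ)⁻¹
            + ((n:ℝ)⁻¹ * (n:ℝ)) * Real.log ρ := by ring
        _ = (Real.log C + Real.log ‖v‖ - Real.log ‖w‖) * (n:ℝ)⁻¹ + Real.log ρ := by
            rw [h4, one_mul]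
  linarith
end
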